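/- Let n ≥ 1 and 0 ≤ k ≤ n−1, and let l be a duplicate-free list whose set of entries is exactly {1, …, n} and whose last entry is k+1. Then l is isotopy equivalent to a list of the form λ₁ ++ λ₂ ++ [k+1], where λ₁ is a duplicate-free list whose set of entries is exactly {1, …, k} and λ₂ is a duplicate-free list whose set of entries is exactly {k+2, …, n}. -/

import Mathlib

/-- An elementary move on a duplicate-free list of natural numbers: transpose two
adjacent entries `x = i_j` and `y = i_{j+1}` for which there exists a later entry
`p = i_q` (with `q > j+1`) such that `x < p < y` or `x > p > y`. -/
def ElemMove (l l' : List ℕ) : Prop :=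
  l.Nodup ∧ ∃ (a b : List ℕ) (x y : ℕ),
    l = a ++ x :: y :: b ∧ l' = a ++ y :: x :: b ∧
    ∃ p ∈ b, (x < p ∧ p < y) ∨ (y < p ∧ p < x)

/-- Isotopy equivalence: the smallest equivalence relation generated by elementary moves. -/
def IsoEquiv : List ℕ → List ℕ → Prop := Relation.EqvGen ElemMove

lemma ElemMove.perm {l l' : List ℕ} (h : ElemMove l l') : l.Perm l' := by
  obtain ⟨-, a, b, x, y, hl, hl', -⟩ := h
  subst hl hl'
  exact List.Perm.append_left a (List.Perm.swap y x b)

lemma IsoEquiv.perm {l l' : List ℕ} (h : IsoEquiv l l') : l.Perm l' := by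
  induction h with
  | rel _ _ h => exact h.perm
  | refl _ => exact List.Perm.refl _
  | symm _ _ _ ih => exact ih.symm
  | trans _ _ _ _ _ ih1 ih2 => exact ih1.trans ih2

lemma IsoEquiv.cons {c : ℕ} {l l' : List ℕ} (h : IsoEquiv l l') (hc : c ∉ l) :
    IsoEquiv (c :: l) (c :: l') := by
  revert hc
  induction h with
  | rel u v h =>
      intro hc
      obtain ⟨hnd, a, b, x, y, hl, hl', p, hp, hor⟩ := h
      exact Relation.EqvGen.rel _ _ ⟨List.nodup_cons.mpr ⟨hc, hnd⟩,
        c :: a, b, x, y, by simp [hl], by simp [hl'], p, hp, hor⟩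
  | refl _ => intro _; exact Relation.EqvGen.refl _
  | symm u v h ih =>
      intro hc
      have hu : c ∉ u := fun hm => hc ((IsoEquiv.perm h).mem_iff.mp hm)
      exact Relation.EqvGen.symm _ _ (ih hu)
  | trans u v w h1 h2 ih1 ih2 =>
      intro hc
      have hv : c ∉ v := fun hm => hc ((IsoEquiv.perm h1).mem_iff.mpr hm)
      exact Relation.EqvGen.trans _ _ _ (ih1 hc) (ih2 hv)

lemma move_big (k c : ℕ) (hc : k + 2 ≤ c) :
    ∀ (A B : List ℕ), (∀ a ∈ A, a ≤ k) → (c :: (A ++ B ++ [k+1])).Nodup →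
      IsoEquiv (c :: (A ++ B ++ [k+1])) (A ++ (c :: B) ++ [k+1]) := by
  intro A
  induction A with
  | nil => intro B _ _; exact Relation.EqvGen.refl _
  | cons a A' ih =>
      intro B hA hnd
      have step : ElemMove (c :: a :: (A' ++ B ++ [k+1])) (a :: c :: (A' ++ B ++ [k+1])) := by
        refine ⟨by simpa using hnd, [], A' ++ B ++ [k+1], c, a, by simp, by simp, k+1, by simp,
          Or.inr ⟨Nat.lt_succ_of_le (hA a (by simp)), by omega⟩⟩
      have hnd' : (c :: (A' ++ B ++ [k+1])).Nodup := by
        simp only [List.nodup_cons, List.cons_append, List.nodup_cons, List.mem_cons,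
          List.mem_append] at hnd ⊢
        tauto
      have ha : a ∉ c :: (A' ++ B ++ [k+1]) := by
        simp only [List.nodup_cons, List.cons_append, List.nodup_cons, List.mem_cons,
          List.mem_append, List.mem_singleton] at hnd ⊢
        tauto
      have h3 : IsoEquiv (a :: c :: (A' ++ B ++ [k+1])) (a :: (A' ++ (c :: B) ++ [k+1])) :=
        IsoEquiv.cons (ih B (fun x hx => hA x (by simp [hx])) hnd') ha
      simp only [List.cons_append]
      exact Relation.EqvGen.trans _ _ _ (Relation.EqvGen.rel _ _ step) h3

lemma key (k : ℕ) : ∀ (m : List ℕ), (m ++ [k+1]).Nodup →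
    (∀ x ∈ m, x ≤ k ∨ k + 2 ≤ x) →
    IsoEquiv (m ++ [k+1])
      ((m.filter (· ≤ k)) ++ (m.filter (fun x => ¬ x ≤ k)) ++ [k+1]) := by
  intro m
  induction m with
  | nil => intro _ _; exact Relation.EqvGen.refl _
  | cons c t ih =>
      intro hnd hsm
      have hnd' : (t ++ [k+1]).Nodup := List.Nodup.of_cons (by simpa using hnd)
      have hct : c ∉ t ++ [k+1] := by
        simp only [List.cons_append, List.nodup_cons] at hnd; exact hnd.1
      have ihh := ih hnd' (fun x hx => hsm x (by simp [hx]))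
      have h1 : IsoEquiv (c :: (t ++ [k+1]))
          (c :: ((t.filter (· ≤ k)) ++ (t.filter (fun x => ¬ x ≤ k)) ++ [k+1])) :=
        IsoEquiv.cons ihh hct
      rcases hsm c (by simp) with hle | hge
      · have : (c :: t).filter (· ≤ k) = c :: t.filter (· ≤ k) := by
          simp [List.filter_cons, hle]
        rw [this]
        have : (c :: t).filter (fun x => ¬ x ≤ k) = t.filter (fun x => ¬ x ≤ k) := by
          simp [List.filter_cons, hle]
        rw [this]
        simpa using h1
      · have hnle : ¬ c ≤ k := by omega
        have e1 : (c :: t).filter (· ≤ k) = t.filter (· ≤ k) := by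
          simp [List.filter_cons, hnle]
        have e2 : (c :: t).filter (fun x => ¬ x ≤ k) = c :: t.filter (fun x => ¬ x ≤ k) := by
          simp [List.filter_cons, hnle]
        rw [e1, e2]
        have hndperm : (c :: ((t.filter (· ≤ k)) ++ (t.filter (fun x => ¬ x ≤ k)) ++ [k+1])).Nodup := by
          have hp : (c :: (t ++ [k+1])).Perm
              (c :: ((t.filter (· ≤ k)) ++ (t.filter (fun x => ¬ x ≤ k)) ++ [k+1])) :=
            List.Perm.cons c ihh.perm
          exact hp.nodup_iff.mp (by simpa using hnd)
        have h2 := move_big k c hge (t.filter (· ≤ k)) (t.filter (fun x => ¬ x ≤ k))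
          (fun a ha => by simpa using (List.of_mem_filter ha)) hndperm
        refine Relation.EqvGen.trans _ _ _ ?_ (by simpa [IsoEquiv] using h2)
        simpa [IsoEquiv] using h1

/-- Normal form: a duplicate-free list with entries exactly `{1, …, n}` and last entry
`k+1` is isotopy equivalent to a list `λ₁ ++ λ₂ ++ [k+1]`, where `λ₁` has entries
exactly `{1, …, k}` and `λ₂` has entries exactly `{k+2, …, n}`. -/
theorem isoEquiv_normal_form (n k : ℕ) (hn : 1 ≤ n) (hk : k ≤ n - 1)
    (l : List ℕ) (hnd : l.Nodup) (hmem : ∀ x, x ∈ l ↔ x ∈ Finset.Icc 1 n)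
    (hlast : l.getLast? = some (k + 1)) :
    ∃ lam₁ lam₂ : List ℕ,
      lam₁.Nodup ∧ (∀ x, x ∈ lam₁ ↔ x ∈ Finset.Icc 1 k) ∧
      lam₂.Nodup ∧ (∀ x, x ∈ lam₂ ↔ x ∈ Finset.Icc (k + 2) n) ∧
      IsoEquiv l (lam₁ ++ lam₂ ++ [k + 1]) := by
  have hlne : l ≠ [] := by rintro rfl; simp at hlast
  set m := l.dropLast with hm
  have hdecomp : l = m ++ [k + 1] := by
    have h1 : l = l.dropLast ++ [l.getLast hlne] := (List.dropLast_append_getLast hlne).symm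
    have h2 : l.getLast hlne = k + 1 := by
      have := List.getLast?_eq_getLast hlne
      rw [this] at hlast
      exact Option.some.inj hlast
    rw [h2] at h1; exact h1
  have hndm : (m ++ [k+1]).Nodup := hdecomp ▸ hnd
  have hk1m : (k+1) ∉ m := by
    intro h
    have := List.disjoint_of_nodup_append hndm h
    simp at this
  have hmmem : ∀ x, x ∈ m ↔ (1 ≤ x ∧ x ≤ n ∧ x ≠ k + 1) := by
    intro x
    constructor
    · intro hx
      have hxl : x ∈ l := by rw [hdecomp]; simp [hx]
      have := (hmem x).mp hxl
      simp only [Finset.mem_Icc] at this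
      refine ⟨this.1, this.2, ?_⟩
      rintro rfl; exact hk1m hx
    · rintro ⟨h1, h2, h3⟩
      have hxl : x ∈ l := (hmem x).mpr (by simp [Finset.mem_Icc]; omega)
      rw [hdecomp] at hxl
      simp only [List.mem_append, List.mem_singleton] at hxl
      tauto
  have hsm : ∀ x ∈ m, x ≤ k ∨ k + 2 ≤ x := by
    intro x hx
    have := (hmmem x).mp hx
    omega
  refine ⟨m.filter (· ≤ k), m.filter (fun x => ¬ x ≤ k), ?_, ?_, ?_, ?_, ?_⟩
  · exact List.Nodup.filter _ (List.Nodup.of_append_left hndm)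
  · intro x
    simp only [List.mem_filter, Finset.mem_Icc, hmmem x, decide_eq_true_eq]
    omega
  · exact List.Nodup.filter _ (List.Nodup.of_append_left hndm)
  · intro x
    simp only [List.mem_filter, Finset.mem_Icc, hmmem x, decide_eq_true_eq]
    constructor
    · rintro ⟨⟨h1, h2, h3⟩, h4⟩; simp at h4; omega
    · intro h; refine ⟨⟨by omega, by omega, by omega⟩, by simp; omega⟩
  · rw [hdecomp]
    exact key k m hndm hsm
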